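/- The dual of a translation association scheme is a translation association scheme: if (X, R) is a translation scheme on a finite abelian group X, with \(X^* = X_0^* \sqcup \cdots \sqcup X_d^*\) the partition of characters by eigenspaces, then the relations \(R_i^* = \{(\varepsilon,\eta) \in (X^*)^2 : \eta\varepsilon^{-1} \in X_i^*\}\) define a commutative association scheme on \(X^*\) which is translation-invariant; moreover its first eigenmatrix equals the second eigenmatrix Q of (X,R) and its second eigenmatrix equals the first eigenmatrix P of (X,R). -/

import Mathlib

open scoped ComplexConjugate
open Matrix

private lemma aux_unit_conj {G : Type} [Fintype G] [Group G] (ε : G →* ℂˣ) (x : G) :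
    conj ((ε x : ℂˣ) : ℂ) = (((ε x)⁻¹ : ℂˣ) : ℂ) := by
  have h1 : ((ε x : ℂˣ) : ℂ) ^ Fintype.card G = 1 := by
    rw [← Units.val_pow_eq_pow_val, ← map_pow, pow_card_eq_one, _root_.map_one, Units.val_one]
  have h0 : (0:ℝ) ≤ ‖((ε x : ℂˣ) : ℂ)‖ := norm_nonneg _
  have hn : Fintype.card G ≠ 0 := Fintype.card_ne_zero
  have habs : ‖((ε x : ℂˣ) : ℂ)‖ = 1 := by
    have h2 : ‖((ε x : ℂˣ) : ℂ)‖ ^ Fintype.card G = 1 := by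
      rw [← norm_pow, h1, norm_one]
    by_contra hne
    rcases lt_or_gt_of_ne hne with hlt | hgt
    · have := pow_lt_one₀ h0 hlt hn; rw [h2] at this; exact lt_irrefl _ this
    · have := one_lt_pow₀ hgt hn; rw [h2] at this; exact lt_irrefl _ this
  rw [← Complex.inv_eq_conj habs, Units.val_inv_eq_inv_val]

private lemma aux_sum_char {G : Type} [Fintype G] [CommGroup G] (ε : G →* ℂˣ) :
    ∑ x, ((ε x : ℂˣ) : ℂ) = if ε = 1 then (Fintype.card G : ℂ) else 0 := by
  split_ifs with h
  · subst h; simp [Finset.card_univ]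
  · obtain ⟨x0, hx0⟩ : ∃ x0, ε x0 ≠ 1 := by
      by_contra hc
      push_neg at hc
      exact h (MonoidHom.ext fun x => hc x)
    have key : ((ε x0 : ℂˣ):ℂ) * ∑ x, ((ε x:ℂˣ):ℂ) = ∑ x, ((ε x:ℂˣ):ℂ) := by
      rw [Finset.mul_sum]
      calc ∑ x, ((ε x0:ℂˣ):ℂ) * ((ε x:ℂˣ):ℂ)
          = ∑ x, ((ε (x0 * x) : ℂˣ):ℂ) := by simp [_root_.map_mul]
        _ = ∑ x, ((ε x:ℂˣ):ℂ) :=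
            Fintype.sum_equiv (Equiv.mulLeft x0) _ _ (fun x => rfl)
    have hne : ((ε x0:ℂˣ):ℂ) ≠ 1 := fun hc => hx0 (Units.ext (by simpa using hc))
    have h2 : (((ε x0:ℂˣ):ℂ) - 1) * ∑ x, ((ε x:ℂˣ):ℂ) = 0 := by ring_nf; linear_combination key
    rcases mul_eq_zero.1 h2 with h3 | h3
    · exact absurd (by linear_combination h3) hne
    · exact h3

private def charEquivAux (X : Type) [CommGroup X] : (X →* ℂˣ) ≃ AddChar (Additive X) ℂ where
  toFun ε := AddChar.toMonoidHomEquiv.symm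
    ((Units.coeHom ℂ).comp (ε.comp (MulEquiv.multiplicativeAdditive (H := X)).toMonoidHom))
  invFun ψ := (ψ.toMonoidHom.comp
    (MulEquiv.multiplicativeAdditive (H := X)).symm.toMonoidHom).toHomUnits
  left_inv ε := by ext x; simp
  right_inv ψ := by ext a; simp

private lemma aux_card (X : Type) [Fintype X] [CommGroup X] [Fintype (X →* ℂˣ)] :
    Fintype.card (X →* ℂˣ) = Fintype.card X := by
  calc Fintype.card (X →* ℂˣ)
      = Fintype.card (AddChar (Additive X) ℂ) := Fintype.card_congr (charEquivAux X)
    _ = Fintype.card (Additive X) := AddChar.card_eq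
    _ = Fintype.card X := Fintype.card_congr Additive.toMul

private lemma aux_sep {X : Type} [Fintype X] [CommGroup X] {x : X} (hx : x ≠ 1) :
    ∃ ε : X →* ℂˣ, ε x ≠ 1 := by
  obtain ⟨ψ, hψ⟩ := (AddChar.exists_apply_ne_zero (a := Additive.ofMul x)).2 (by simpa using hx)
  refine ⟨(charEquivAux X).symm ψ, fun hc => hψ ?_⟩
  have h1 : (((charEquivAux X).symm ψ) x : ℂ) = ψ (Additive.ofMul x) := by
    conv_rhs => rw [← (charEquivAux X).apply_symm_apply ψ]
    rfl
  rw [hc] at h1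
  simpa using h1.symm

structure CommAssocScheme (X : Type) [Fintype X] [DecidableEq X] (d : ℕ) where
  A : Fin (d + 1) → Matrix X X ℂ
  E : Fin (d + 1) → Matrix X X ℂ
  P : Matrix (Fin (d + 1)) (Fin (d + 1)) ℂ
  Q : Matrix (Fin (d + 1)) (Fin (d + 1)) ℂ
  A_01 : ∀ i x y, A i x y = 0 ∨ A i x y = 1
  A_ne : ∀ i, A i ≠ 0
  A_zero : A 0 = 1
  A_sum : (∑ i, A i) = Matrix.of fun _ _ => (1 : ℂ)
  A_transpose : ∀ i, ∃ j, (A i)ᵀ = A j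
  A_comm : ∀ i j, A i * A j = A j * A i
  A_closed : ∀ i j, ∃ c : Fin (d + 1) → ℂ, A i * A j = ∑ k, c k • A k
  E_idem : ∀ i j, E i * E j = if i = j then E i else 0
  E_sum : (∑ i, E i) = 1
  E_zero : E 0 = (Fintype.card X : ℂ)⁻¹ • Matrix.of fun _ _ => (1 : ℂ)
  E_mem : ∀ i, ∃ c : Fin (d + 1) → ℂ, E i = ∑ k, c k • A k
  P_def : ∀ i, A i = ∑ j, P j i • E j
  Q_def : ∀ i, E i = (Fintype.card X : ℂ)⁻¹ • ∑ j, Q j i • A j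

/-- The dual of a translation association scheme is a translation
association scheme. Let `(X, R)` be a translation scheme on a finite abelian group `X`
(so the relations are translation-invariant and each character vector `ε̂` lies in an
eigenspace `E (jmap ε) ℂ^X`), and define dual adjacency matrices on `X^* = X →* ℂˣ` by
`(Astar i) ε η = 1` iff `jmap (η ε⁻¹) = i`, i.e. by the relations
`R*_i = {(ε, η) : η ε⁻¹ ∈ X_i^*}`. Then the `Astar i` form a commutative association
scheme on `X^*` which is translation-invariant, and its first eigenmatrix equals `Q`
while its second eigenmatrix equals `P`. -/
theorem stmt_14 {X : Type} [Fintype X] [DecidableEq X] [CommGroup X]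
    [Fintype (X →* ℂˣ)] [DecidableEq (X →* ℂˣ)] {d : ℕ}
    (S : CommAssocScheme X d)
    (htrans : ∀ (i : Fin (d + 1)) (z x y : X), S.A i (x * z) (y * z) = S.A i x y)
    (jmap : (X →* ℂˣ) → Fin (d + 1))
    (hj : ∀ ε : X →* ℂˣ,
      (S.E (jmap ε)).mulVec
          (fun x => (Real.sqrt (Fintype.card X) : ℂ)⁻¹ * conj ((ε x : ℂˣ) : ℂ)) =
        fun x => (Real.sqrt (Fintype.card X) : ℂ)⁻¹ * conj ((ε x : ℂˣ) : ℂ))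
    (Astar : Fin (d + 1) → Matrix (X →* ℂˣ) (X →* ℂˣ) ℂ)
    (hAstar : ∀ (i : Fin (d + 1)) (ε η : X →* ℂˣ),
      Astar i ε η = if jmap (η * ε⁻¹) = i then 1 else 0) :
    (∀ i ε η, Astar i ε η = 0 ∨ Astar i ε η = 1) ∧
    (Astar 0 = 1) ∧
    ((∑ i, Astar i) = Matrix.of fun _ _ => (1 : ℂ)) ∧
    (∀ i, ∃ j, (Astar i)ᵀ = Astar j) ∧
    (∀ i j, Astar i * Astar j = Astar j * Astar i) ∧
    (∀ i j, ∃ c : Fin (d + 1) → ℂ, Astar i * Astar j = ∑ k, c k • Astar k) ∧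
    (∀ (i : Fin (d + 1)) (ζ ε η : X →* ℂˣ), Astar i (ε * ζ) (η * ζ) = Astar i ε η) ∧
    (∃ Estar : Fin (d + 1) → Matrix (X →* ℂˣ) (X →* ℂˣ) ℂ,
      (∀ i j, Estar i * Estar j = if i = j then Estar i else 0) ∧
      ((∑ i, Estar i) = 1) ∧
      (Estar 0 = (Fintype.card (X →* ℂˣ) : ℂ)⁻¹ • Matrix.of fun _ _ => (1 : ℂ)) ∧
      (∀ i, Astar i = ∑ j, S.Q j i • Estar j) ∧
      (∀ i, Estar i = (Fintype.card (X →* ℂˣ) : ℂ)⁻¹ • ∑ j, S.P j i • Astar j)) := by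
  classical
  set n := Fintype.card X with hn
  have hn0 : (n:ℂ) ≠ 0 := Nat.cast_ne_zero.2 Fintype.card_ne_zero
  have hs : ((Real.sqrt n : ℝ) : ℂ) ≠ 0 := by
    refine Complex.ofReal_ne_zero.2 (ne_of_gt (Real.sqrt_pos.2 ?_))
    exact_mod_cast Fintype.card_pos
  -- the eigenvector
  set v : (X →* ℂˣ) → X → ℂ :=
    fun ζ x => ((Real.sqrt n : ℝ) : ℂ)⁻¹ * conj ((ζ x : ℂˣ) : ℂ) with hv
  have hEv : ∀ (ζ : X →* ℂˣ) (i), (S.E i).mulVec (v ζ) = if jmap ζ = i then v ζ else 0 := by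
    intro ζ i
    by_cases hcase : jmap ζ = i
    · rw [if_pos hcase, ← hcase]; exact hj ζ
    · rw [if_neg hcase]
      have h2 : (S.E i).mulVec (v ζ) = (S.E i * S.E (jmap ζ)).mulVec (v ζ) := by
        rw [← Matrix.mulVec_mulVec, hj ζ]
      rw [h2, S.E_idem, if_neg (fun h => hcase h.symm), Matrix.zero_mulVec]
  have hErow : ∀ (ζ : X →* ℂˣ) (i), ∑ y, S.E i 1 y * conj ((ζ y : ℂˣ):ℂ)
      = if jmap ζ = i then 1 else 0 := by
    intro ζ i
    have h3 := congrFun (hEv ζ i) 1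
    simp only [Matrix.mulVec, dotProduct, hv] at h3
    have h4 : ((Real.sqrt n : ℝ) : ℂ)⁻¹ * ∑ y, S.E i 1 y * conj ((ζ y : ℂˣ):ℂ)
        = ((Real.sqrt n : ℝ) : ℂ)⁻¹ * (if jmap ζ = i then 1 else 0) := by
      rw [Finset.mul_sum]
      calc ∑ y, ((Real.sqrt n : ℝ) : ℂ)⁻¹ * (S.E i 1 y * conj ((ζ y : ℂˣ):ℂ))
          = ∑ y, S.E i 1 y * (((Real.sqrt n : ℝ) : ℂ)⁻¹ * conj ((ζ y : ℂˣ):ℂ)) := by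
            apply Finset.sum_congr rfl; intro y _; ring
        _ = ((Real.sqrt n : ℝ) : ℂ)⁻¹ * (if jmap ζ = i then 1 else 0) := by
            rw [h3]
            split_ifs
            · simp
            · simp
    exact mul_left_cancel₀ (inv_ne_zero hs) h4
  have hKey : ∀ (ζ : X →* ℂˣ) (i), ∑ y, S.A i 1 y * conj ((ζ y : ℂˣ):ℂ)
      = S.P (jmap ζ) i := by
    intro ζ i
    have hA : ∀ y, S.A i 1 y = ∑ j, S.P j i * S.E j 1 y := by
      intro y
      have := congrFun (congrFun (S.P_def i) 1) y
      simpa [Matrix.sum_apply] using this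
    calc ∑ y, S.A i 1 y * conj ((ζ y : ℂˣ):ℂ)
        = ∑ y, ∑ j, S.P j i * (S.E j 1 y * conj ((ζ y : ℂˣ):ℂ)) := by
          apply Finset.sum_congr rfl; intro y _
          rw [hA y, Finset.sum_mul]
          apply Finset.sum_congr rfl; intro j _; ring
      _ = ∑ j, S.P j i * ∑ y, S.E j 1 y * conj ((ζ y : ℂˣ):ℂ) := by
          rw [Finset.sum_comm]
          simp [Finset.mul_sum]
      _ = S.P (jmap ζ) i := by simp [hErow ζ]
  have hinvapp : ∀ (ζ : X →* ℂˣ) (y : X), conj ((ζ y : ℂˣ):ℂ) = ((ζ⁻¹ y : ℂˣ):ℂ) := by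
    intro ζ y; rw [aux_unit_conj]; rfl
  have hjz : ∀ ζ : X →* ℂˣ, (jmap ζ = 0 ↔ ζ = 1) := by
    intro ζ
    have h0 := hErow ζ 0
    rw [S.E_zero] at h0
    have hsum : ∑ y, conj ((ζ y:ℂˣ):ℂ) = if ζ = 1 then (n:ℂ) else 0 := by
      simp_rw [hinvapp ζ]
      rw [aux_sum_char ζ⁻¹]
      by_cases hone : ζ = 1
      · rw [if_pos ((inv_eq_one (α := X →* ℂˣ)).mpr hone), if_pos hone]
      · rw [if_neg (fun hc => hone ((inv_eq_one (α := X →* ℂˣ)).mp hc)), if_neg hone]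
    have h1 : (n:ℂ)⁻¹ * (if ζ = 1 then (n:ℂ) else 0) = if jmap ζ = 0 then 1 else 0 := by
      rw [← hsum, Finset.mul_sum, ← h0]
      apply Finset.sum_congr rfl; intro y _
      simp [Matrix.smul_apply, hn]
    constructor
    · intro hz
      rw [if_pos hz] at h1
      by_contra hne
      rw [if_neg hne, mul_zero] at h1
      exact one_ne_zero h1.symm
    · intro hz
      rw [if_pos hz, inv_mul_cancel₀ hn0] at h1
      by_contra hne
      rw [if_neg hne] at h1
      exact one_ne_zero h1
  -- algebra of idempotents
  have hPA : ∀ j k, S.E j * S.A k = S.P j k • S.E j := by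
    intro j k
    rw [S.P_def k, Finset.mul_sum]
    simp_rw [Matrix.mul_smul, S.E_idem]
    simp
  have hEc : ∀ j i, S.E j * S.E i = ((n:ℂ)⁻¹ * ∑ k, S.Q k i * S.P j k) • S.E j := by
    intro j i
    calc S.E j * S.E i = S.E j * ((n:ℂ)⁻¹ • ∑ k, S.Q k i • S.A k) := by rw [← S.Q_def]
      _ = (n:ℂ)⁻¹ • ∑ k, S.Q k i • (S.E j * S.A k) := by
          rw [Matrix.mul_smul, Finset.mul_sum]
          simp_rw [Matrix.mul_smul]
      _ = (n:ℂ)⁻¹ • ∑ k, (S.Q k i * S.P j k) • S.E j := by simp_rw [hPA, smul_smul]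
      _ = ((n:ℂ)⁻¹ * ∑ k, S.Q k i * S.P j k) • S.E j := by
          rw [← Finset.sum_smul, smul_smul]
  have hEne : ∀ ζ : X →* ℂˣ, S.E (jmap ζ) ≠ 0 := by
    intro ζ hz
    have h1 := hj ζ
    rw [hz, Matrix.zero_mulVec] at h1
    have h2 := congrFun h1 1
    apply inv_ne_zero hs
    simpa using h2.symm
  have hPconj : ∀ (ζ : X →* ℂˣ) i, S.P (jmap ζ⁻¹) i = conj (S.P (jmap ζ) i) := by
    intro ζ i
    rw [← hKey ζ i, ← hKey ζ⁻¹ i, map_sum]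
    apply Finset.sum_congr rfl; intro y _
    have hAreal : conj (S.A i 1 y) = S.A i 1 y := by
      rcases S.A_01 i 1 y with h | h <;> rw [h] <;> simp
    rw [_root_.map_mul, Complex.conj_conj, hAreal, hinvapp ζ⁻¹]
    simp
  have hjinv : ∀ ζ ζ' : X →* ℂˣ, jmap ζ = jmap ζ' → jmap ζ⁻¹ = jmap ζ'⁻¹ := by
    intro ζ ζ' h
    by_contra hne
    have hrow : ∀ k, S.P (jmap ζ⁻¹) k = S.P (jmap ζ'⁻¹) k := by
      intro k; rw [hPconj ζ k, hPconj ζ' k, h]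
    have h12 : S.E (jmap ζ⁻¹) * S.E (jmap ζ'⁻¹) = 0 := by
      rw [S.E_idem, if_neg hne]
    have hc2 := hEc (jmap ζ⁻¹) (jmap ζ'⁻¹)
    rw [h12] at hc2
    have hcc : ((n:ℂ)⁻¹ * ∑ k, S.Q k (jmap ζ'⁻¹) * S.P (jmap ζ⁻¹) k) = 0 := by
      rcases smul_eq_zero.1 hc2.symm with h3 | h3
      · exact h3
      · exact absurd h3 (hEne ζ⁻¹)
    have h22 := hEc (jmap ζ'⁻¹) (jmap ζ'⁻¹)
    rw [S.E_idem, if_pos rfl] at h22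
    have hc' : ((n:ℂ)⁻¹ * ∑ k, S.Q k (jmap ζ'⁻¹) * S.P (jmap ζ'⁻¹) k) = 0 := by
      rw [show (∑ k, S.Q k (jmap ζ'⁻¹) * S.P (jmap ζ'⁻¹) k)
          = ∑ k, S.Q k (jmap ζ'⁻¹) * S.P (jmap ζ⁻¹) k from by simp_rw [hrow]]
      exact hcc
    rw [hc', zero_smul] at h22
    exact hEne ζ'⁻¹ h22
  -- dual orthogonality
  have hcardstar : Fintype.card (X →* ℂˣ) = n := aux_card X
  have hdual : ∀ w : X, ∑ ρ : X →* ℂˣ, ((ρ w : ℂˣ):ℂ) = if w = 1 then (n:ℂ) else 0 := by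
    intro w
    have hew : ∃ e : (X →* ℂˣ) →* ℂˣ, ∀ ρ, e ρ = ρ w :=
      ⟨{ toFun := fun ρ => ρ w, map_one' := rfl, map_mul' := fun a b => rfl }, fun ρ => rfl⟩
    obtain ⟨e, he⟩ := hew
    have h1 : ∑ ρ : X →* ℂˣ, ((ρ w : ℂˣ):ℂ) = ∑ ρ, ((e ρ : ℂˣ):ℂ) := by
      apply Finset.sum_congr rfl; intro ρ _; rw [he]
    rw [h1, aux_sum_char e, hcardstar]
    by_cases hw : w = 1
    · rw [if_pos hw, if_pos]
      ext ρ
      rw [he, hw, _root_.map_one]; rfl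
    · rw [if_neg hw, if_neg]
      intro hc
      obtain ⟨ε, hε⟩ := aux_sep hw
      exact hε (by rw [← he ε, hc]; rfl)
  -- the coercion identity
  have hcoe : ∀ (ε η : X →* ℂˣ) (y : X),
      ((ε y:ℂˣ):ℂ) * conj ((η y:ℂˣ):ℂ) = conj ((((η * ε⁻¹) y : ℂˣ)):ℂ) := by
    intro ε η y
    rw [hinvapp, hinvapp]
    have h1 : (((η * ε⁻¹)⁻¹ : X →* ℂˣ) y : ℂˣ) = ε y * η⁻¹ y := by
      show (η y * (ε y)⁻¹)⁻¹ = ε y * (η y)⁻¹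
      rw [_root_.mul_inv_rev, inv_inv]
    rw [h1, Units.val_mul]
  have hAdisj : ∀ i j x y, i ≠ j → S.A i x y * S.A j x y = 0 := by
    intro i j x y hij
    rcases S.A_01 i x y with h|h
    · rw [h, zero_mul]
    rcases S.A_01 j x y with h'|h'
    · rw [h', mul_zero]
    exfalso
    have hsum : ∑ k, S.A k x y = 1 := by
      have := congrFun (congrFun S.A_sum x) y
      simpa [Matrix.sum_apply] using this
    have hre : ∑ k, (S.A k x y).re = 1 := by
      have h2 := congrArg Complex.re hsum
      rwa [Complex.re_sum] at h2
    have hnn : ∀ k, 0 ≤ (S.A k x y).re := by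
      intro k; rcases S.A_01 k x y with hk|hk <;> rw [hk] <;> norm_num
    have h2 : ∑ k ∈ ({i,j} : Finset (Fin (d+1))), (S.A k x y).re ≤ 1 := by
      rw [← hre]
      exact Finset.sum_le_sum_of_subset_of_nonneg (Finset.subset_univ _)
        (fun k _ _ => hnn k)
    rw [Finset.sum_pair hij, h, h'] at h2
    norm_num at h2
  have hrho : ∀ (ρ : X →* ℂˣ) (y z : X),
      conj ((ρ y:ℂˣ):ℂ) * ((ρ z:ℂˣ):ℂ) = ((ρ (y⁻¹ * z) : ℂˣ):ℂ) := by
    intro ρ y z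
    rw [_root_.map_mul, Units.val_mul, hinvapp]
    congr 1
    show ((ρ⁻¹ y : ℂˣ):ℂ) = ((ρ y⁻¹ :ℂˣ):ℂ)
    rw [MonoidHom.map_inv]
    rfl
  set Estar : Fin (d+1) → Matrix (X →* ℂˣ) (X →* ℂˣ) ℂ :=
    fun i => Matrix.of fun ε η =>
      (n:ℂ)⁻¹ * ∑ y, S.A i 1 y * ((ε y:ℂˣ):ℂ) * conj ((η y:ℂˣ):ℂ) with hEstardef
  have hEstar_apply : ∀ i ε η, Estar i ε η
      = (n:ℂ)⁻¹ * ∑ y, S.A i 1 y * ((ε y:ℂˣ):ℂ) * conj ((η y:ℂˣ):ℂ) := fun i ε η => rfl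
  have hEstar_P : ∀ i ε η, Estar i ε η = (n:ℂ)⁻¹ * S.P (jmap (η * ε⁻¹)) i := by
    intro i ε η
    rw [hEstar_apply, ← hKey (η * ε⁻¹) i]
    congr 1
    apply Finset.sum_congr rfl; intro y _
    rw [mul_assoc, hcoe ε η y]
  have hEQ : ∀ i y, S.E i 1 y = (n:ℂ)⁻¹ * ∑ j, S.Q j i * S.A j 1 y := by
    intro i y
    have := congrFun (congrFun (S.Q_def i) 1) y
    simpa [Matrix.sum_apply, Finset.mul_sum] using this
  have hAstar_E : ∀ i, Astar i = ∑ j, S.Q j i • Estar j := by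
    intro i; ext ε η
    rw [hAstar i ε η]
    have hrhs : (∑ j, S.Q j i • Estar j) ε η = ∑ j, S.Q j i * Estar j ε η := by
      simp [Matrix.sum_apply]
    rw [hrhs, ← hErow (η * ε⁻¹) i]
    symm
    calc ∑ j, S.Q j i * Estar j ε η
        = ∑ j, ∑ y, (n:ℂ)⁻¹ * (S.Q j i * S.A j 1 y) * (((ε y:ℂˣ):ℂ) * conj ((η y:ℂˣ):ℂ)) := by
          apply Finset.sum_congr rfl; intro j _
          rw [hEstar_apply, Finset.mul_sum, Finset.mul_sum]
          apply Finset.sum_congr rfl; intro y _; ring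
      _ = ∑ y, ∑ j, (n:ℂ)⁻¹ * (S.Q j i * S.A j 1 y) * (((ε y:ℂˣ):ℂ) * conj ((η y:ℂˣ):ℂ)) :=
          Finset.sum_comm
      _ = ∑ y, S.E i 1 y * conj (((η * ε⁻¹) y : ℂˣ):ℂ) := by
          apply Finset.sum_congr rfl; intro y _
          rw [← hcoe ε η y, hEQ i y, Finset.mul_sum, Finset.sum_mul]
  have hEEgen : ∀ i j ε η, (Estar i * Estar j) ε η
      = (n:ℂ)⁻¹ * ∑ y, S.A i 1 y * S.A j 1 y * ((ε y:ℂˣ):ℂ) * conj ((η y:ℂˣ):ℂ) := by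
    intro i j ε η
    rw [Matrix.mul_apply]
    have hcol : ∀ y:X, ∑ z, (S.A i 1 y * S.A j 1 z * ((ε y:ℂˣ):ℂ) * conj ((η z:ℂˣ):ℂ))
          * (if y⁻¹ * z = 1 then (n:ℂ) else 0)
        = S.A i 1 y * S.A j 1 y * ((ε y:ℂˣ):ℂ) * conj ((η y:ℂˣ):ℂ) * (n:ℂ) := by
      intro y
      rw [Finset.sum_eq_single y]
      · rw [if_pos (inv_mul_cancel y)]
      · intro z _ hz
        rw [if_neg (fun hc => hz (by rw [← inv_mul_eq_one.1 hc])), mul_zero]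
      · intro hy; exact absurd (Finset.mem_univ y) hy
    calc ∑ ρ : X →* ℂˣ, Estar i ε ρ * Estar j ρ η
        = (n:ℂ)⁻¹ * (n:ℂ)⁻¹ * ∑ ρ : X →* ℂˣ, ∑ y, ∑ z,
            (S.A i 1 y * ((ε y:ℂˣ):ℂ) * conj ((ρ y:ℂˣ):ℂ))
            * (S.A j 1 z * ((ρ z:ℂˣ):ℂ) * conj ((η z:ℂˣ):ℂ)) := by
          rw [Finset.mul_sum]
          apply Finset.sum_congr rfl; intro ρ _
          rw [hEstar_apply, hEstar_apply, mul_mul_mul_comm, Finset.sum_mul_sum]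
      _ = (n:ℂ)⁻¹ * (n:ℂ)⁻¹ * ∑ y, ∑ z,
            (S.A i 1 y * S.A j 1 z * ((ε y:ℂˣ):ℂ) * conj ((η z:ℂˣ):ℂ))
            * ∑ ρ : X →* ℂˣ, ((ρ (y⁻¹ * z) : ℂˣ):ℂ) := by
          congr 1
          rw [Finset.sum_comm]
          apply Finset.sum_congr rfl; intro y _
          rw [Finset.sum_comm]
          apply Finset.sum_congr rfl; intro z _
          rw [Finset.mul_sum]
          apply Finset.sum_congr rfl; intro ρ _
          rw [← hrho ρ y z]; ring
      _ = (n:ℂ)⁻¹ * (n:ℂ)⁻¹ * ∑ y, ∑ z,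
            (S.A i 1 y * S.A j 1 z * ((ε y:ℂˣ):ℂ) * conj ((η z:ℂˣ):ℂ))
            * (if y⁻¹ * z = 1 then (n:ℂ) else 0) := by
          simp_rw [hdual]
      _ = (n:ℂ)⁻¹ * (n:ℂ)⁻¹ * ((∑ y, S.A i 1 y * S.A j 1 y * ((ε y:ℂˣ):ℂ) * conj ((η y:ℂˣ):ℂ)) * (n:ℂ)) := by
          simp_rw [hcol]
          rw [Finset.sum_mul]
      _ = (n:ℂ)⁻¹ * ∑ y, S.A i 1 y * S.A j 1 y * ((ε y:ℂˣ):ℂ) * conj ((η y:ℂˣ):ℂ) := by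
          field_simp
  have hEE : ∀ i j, Estar i * Estar j = if i = j then Estar i else 0 := by
    intro i j
    by_cases hij : i = j
    · subst hij
      rw [if_pos rfl]
      ext ε η
      rw [hEEgen, hEstar_apply]
      congr 1
      apply Finset.sum_congr rfl; intro y _
      rcases S.A_01 i 1 y with h|h <;> rw [h] <;> ring
    · rw [if_neg hij]
      ext ε η
      rw [hEEgen]
      have hz : ∀ y:X, S.A i 1 y * S.A j 1 y * ((ε y:ℂˣ):ℂ) * conj ((η y:ℂˣ):ℂ) = 0 := by
        intro y
        rw [hAdisj i j 1 y hij, zero_mul, zero_mul]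
      simp [hz]
  have hgrp : ∀ ε η : X →* ℂˣ, (ε * η⁻¹)⁻¹ = η * ε⁻¹ := by
    intro ε η; ext x
    simp only [MonoidHom.inv_apply, MonoidHom.mul_apply]
    group
  have hinvinv : ∀ ζ : X →* ℂˣ, ζ⁻¹⁻¹ = ζ := by
    intro ζ; ext x
    simp only [MonoidHom.inv_apply]
    group
  have hEsum : (∑ i, Estar i) = 1 := by
    ext ε η
    rw [Matrix.sum_apply, Matrix.one_apply]
    calc ∑ i, Estar i ε η
        = (n:ℂ)⁻¹ * ∑ i, ∑ y, S.A i 1 y * ((ε y:ℂˣ):ℂ) * conj ((η y:ℂˣ):ℂ) := by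
          rw [Finset.mul_sum]
          exact Finset.sum_congr rfl fun i _ => hEstar_apply i ε η
      _ = (n:ℂ)⁻¹ * ∑ y, (∑ i, S.A i 1 y) * (((ε y:ℂˣ):ℂ) * conj ((η y:ℂˣ):ℂ)) := by
          congr 1
          rw [Finset.sum_comm]
          apply Finset.sum_congr rfl; intro y _
          rw [Finset.sum_mul]
          apply Finset.sum_congr rfl; intro i _; ring
      _ = (n:ℂ)⁻¹ * ∑ y, ((((η * ε⁻¹)⁻¹ : X →* ℂˣ) y : ℂˣ):ℂ) := by
          congr 1
          apply Finset.sum_congr rfl; intro y _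
          have hone : ∑ i, S.A i 1 y = 1 := by
            have := congrFun (congrFun S.A_sum 1) y
            simpa [Matrix.sum_apply] using this
          rw [hone, one_mul, hcoe ε η y, hinvapp]
      _ = if ε = η then 1 else 0 := by
          rw [aux_sum_char, ← hn]
          by_cases h : ε = η
          · rw [if_pos (inv_eq_one.mpr (mul_inv_eq_one.mpr h.symm)), if_pos h,
              inv_mul_cancel₀ hn0]
          · rw [if_neg (fun hc => h (mul_inv_eq_one.mp (inv_eq_one.mp hc)).symm),
              if_neg h, mul_zero]
  have hEstar0 : Estar 0 = (Fintype.card (X →* ℂˣ) : ℂ)⁻¹ • Matrix.of fun _ _ => (1:ℂ) := by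
    ext ε η
    have hsum1 : ∑ y, S.A 0 1 y * ((ε y:ℂˣ):ℂ) * conj ((η y:ℂˣ):ℂ) = 1 := by
      calc ∑ y, S.A 0 1 y * ((ε y:ℂˣ):ℂ) * conj ((η y:ℂˣ):ℂ)
          = ∑ y, (if (1:X) = y then ((ε y:ℂˣ):ℂ) * conj ((η y:ℂˣ):ℂ) else 0) := by
            apply Finset.sum_congr rfl; intro y _
            rw [S.A_zero, Matrix.one_apply]
            split_ifs <;> ring
        _ = 1 := by
            rw [Finset.sum_ite_eq]
            simp
    rw [hEstar_apply, hsum1, mul_one, Matrix.smul_apply, Matrix.of_apply, smul_eq_mul,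
      mul_one, hcardstar]
  have hEfromP : ∀ i, Estar i = (n:ℂ)⁻¹ • ∑ j, S.P j i • Astar j := by
    intro i
    ext ε η
    have hsr : ∑ j, (S.P j i • Astar j) ε η = S.P (jmap (η * ε⁻¹)) i := by
      calc ∑ j, (S.P j i • Astar j) ε η
          = ∑ j, S.P j i * (if jmap (η * ε⁻¹) = j then 1 else 0) := by
            apply Finset.sum_congr rfl; intro j _
            rw [Matrix.smul_apply, smul_eq_mul, hAstar]
        _ = S.P (jmap (η * ε⁻¹)) i := by simp
    rw [hEstar_P i ε η, Matrix.smul_apply, Matrix.sum_apply, hsr, smul_eq_mul]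
  have hprod : ∀ i j, Astar i * Astar j = ∑ k, (S.Q k i * S.Q k j) • Estar k := by
    intro i j
    rw [hAstar_E i, hAstar_E j, Finset.sum_mul]
    simp_rw [Finset.mul_sum, Matrix.smul_mul, Matrix.mul_smul, hEE, smul_ite, smul_zero,
      Finset.sum_ite_eq, Finset.mem_univ, if_true, smul_smul]
  refine ⟨?_, ?_, ?_, ?_, ?_, ?_, ?_, Estar, hEE, hEsum, hEstar0, hAstar_E, ?_⟩
  · intro i ε η
    rw [hAstar i ε η]
    split_ifs <;> simp
  · ext ε η
    rw [hAstar 0 ε η, Matrix.one_apply]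
    by_cases h : ε = η
    · rw [if_pos ((hjz _).mpr (mul_inv_eq_one.mpr h.symm)), if_pos h]
    · rw [if_neg (fun hc => h (mul_inv_eq_one.mp ((hjz _).mp hc)).symm), if_neg h]
  · ext ε η
    simp [Matrix.sum_apply, hAstar]
  · intro i
    by_cases hex : ∃ ξ, jmap ξ = i
    · obtain ⟨ξ, hξ⟩ := hex
      refine ⟨jmap ξ⁻¹, ?_⟩
      ext ε η
      rw [Matrix.transpose_apply, hAstar i η ε, hAstar (jmap ξ⁻¹) ε η]
      have hiff : jmap (ε * η⁻¹) = i ↔ jmap (η * ε⁻¹) = jmap ξ⁻¹ := by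
        constructor
        · intro h
          have h2 := hjinv (ε * η⁻¹) ξ (h.trans hξ.symm)
          rw [hgrp ε η] at h2
          exact h2
        · intro h
          have h2 := hjinv (η * ε⁻¹) ξ⁻¹ h
          rw [hgrp η ε, hinvinv, hξ] at h2
          exact h2
      by_cases hca : jmap (ε * η⁻¹) = i
      · rw [if_pos hca, if_pos (hiff.mp hca)]
      · rw [if_neg hca, if_neg (fun hc => hca (hiff.mpr hc))]
    · refine ⟨i, ?_⟩
      ext ε η
      rw [Matrix.transpose_apply, hAstar i η ε, hAstar i ε η,
        if_neg (fun hc => hex ⟨ε * η⁻¹, hc⟩), if_neg (fun hc => hex ⟨η * ε⁻¹, hc⟩)]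
  · intro i j
    rw [hprod i j, hprod j i]
    exact Finset.sum_congr rfl fun k _ => by rw [mul_comm]
  · intro i j
    refine ⟨fun m => ∑ k, (S.Q k i * S.Q k j) * ((n:ℂ)⁻¹ * S.P m k), ?_⟩
    rw [hprod i j]
    calc ∑ k, (S.Q k i * S.Q k j) • Estar k
        = ∑ k, ∑ m, ((S.Q k i * S.Q k j) * ((n:ℂ)⁻¹ * S.P m k)) • Astar m := by
          apply Finset.sum_congr rfl; intro k _
          rw [hEfromP k, smul_smul, Finset.smul_sum]
          simp_rw [smul_smul, mul_assoc]
      _ = ∑ m, (∑ k, (S.Q k i * S.Q k j) * ((n:ℂ)⁻¹ * S.P m k)) • Astar m := by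
          rw [Finset.sum_comm]
          exact Finset.sum_congr rfl fun m _ => (Finset.sum_smul).symm
  · intro i ζ ε η
    rw [hAstar, hAstar]
    have harg : η * ζ * (ε * ζ)⁻¹ = η * ε⁻¹ := by
      ext x
      simp only [MonoidHom.inv_apply, MonoidHom.mul_apply]
      group
    rw [harg]
  · intro i
    rw [hEfromP i, hcardstar]
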